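/- arXiv:1203.4873 — 3 statements merged into one kernel-verified Lean document; each statement's English description precedes it below -/
import Mathlib

section
/- For every t ≥ 0 the constant K_{√t} = (∫_ℝ e^{√t·|z|} p_1(z) dz)^{1/2} is finite, and for every f ∈ 𝒳₀ the function T_t f belongs to 𝒳₀ with ‖T_t f‖₀ ≤ K_{√t} ‖f‖₀. In particular each T_t is a bounded linear operator on 𝒳₀. -/
open MeasureTheory Real Filter Topology

/-- The heat kernel `p_t(x) = (2πt)^{-1/2} exp(-x²/(2t))`. -/
noncomputable def heatKernel (t x : ℝ) : ℝ :=
  (Real.sqrt (2 * Real.pi * t))⁻¹ * Real.exp (-(x ^ 2) / (2 * t))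

/-- The Brownian (heat) semigroup `T_t f(x) = ∫ p_t(x-y) f(y) dy`, with `T_0 f = f`. -/
noncomputable def heatOp (t : ℝ) (f : ℝ → ℝ) (x : ℝ) : ℝ :=
  if t = 0 then f x else ∫ y : ℝ, heatKernel t (x - y) * f y

lemma hk_nonneg (t x : ℝ) : 0 ≤ heatKernel t x := by
  unfold heatKernel; positivity

lemma hk_meas (t : ℝ) : Measurable (heatKernel t) := by
  unfold heatKernel
  exact (measurable_const.mul ((measurable_id.pow_const 2).neg.div_const _).exp)

lemma integrable_exp_mul_abs_sub_sq {c b : ℝ} (hb : 0 < b) :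
    Integrable (fun z : ℝ => Real.exp (c * |z| - b * z ^ 2)) := by
  have h2 : (0:ℝ) < b / 2 := by linarith
  have h := (integrable_exp_neg_mul_sq h2).const_mul (Real.exp (c ^ 2 / (2 * b)))
  refine h.mono' ?_ ?_
  · exact (((measurable_const.mul measurable_abs).sub
      (measurable_const.mul (measurable_id.pow_const 2))).exp).aestronglyMeasurable
  filter_upwards with z
  rw [Real.norm_eq_abs, abs_of_nonneg (Real.exp_nonneg _), ← Real.exp_add, Real.exp_le_exp]
  have h1 : c * |z| ≤ c ^ 2 / (2 * b) + (b / 2) * z ^ 2 := by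
    have e : c ^ 2 / (2*b) + (b/2) * z ^ 2 = (c ^ 2 + b ^ 2 * z ^ 2) / (2*b) := by
      field_simp
    rw [e, le_div_iff₀ (by positivity)]
    nlinarith [sq_nonneg (c - b * |z|), sq_abs z]
  nlinarith [sq_abs z]

lemma hk_integrable {t : ℝ} (ht : 0 < t) : Integrable (heatKernel t) := by
  refine Integrable.congr ((integrable_exp_neg_mul_sq
    (show (0:ℝ) < (2*t)⁻¹ by positivity)).const_mul ((Real.sqrt (2*Real.pi*t))⁻¹)) ?_
  filter_upwards with z
  unfold heatKernel
  congr 1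
  field_simp

lemma integral_hk {t : ℝ} (ht : 0 < t) : ∫ z : ℝ, heatKernel t z = 1 := by
  unfold heatKernel
  rw [MeasureTheory.integral_const_mul]
  have : ∀ z : ℝ, -(z ^ 2) / (2 * t) = -(2*t)⁻¹ * z ^ 2 := by intro z; field_simp
  simp_rw [this]
  rw [integral_gaussian]
  have h1 : π / (2*t)⁻¹ = 2 * π * t := by field_simp
  rw [h1, inv_mul_cancel₀]
  positivity

-- shifted kernel integrable
lemma hk_shift_integrable {t : ℝ} (ht : 0 < t) (x : ℝ) :
    Integrable (fun y : ℝ => heatKernel t (x - y)) := by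
  have h1 : Integrable (fun y : ℝ => heatKernel t (x + y)) :=
    (hk_integrable ht).comp_add_left x
  have h2 := h1.comp_neg
  refine h2.congr ?_
  filter_upwards with y
  simp [sub_eq_add_neg]

lemma integral_hk_shift {t : ℝ} (ht : 0 < t) (x : ℝ) :
    ∫ y : ℝ, heatKernel t (x - y) = 1 := by
  have h1 : ∫ y : ℝ, heatKernel t (x - y) = ∫ y : ℝ, heatKernel t (x + y) := by
    rw [← integral_neg_eq_self (fun y => heatKernel t (x + y)) volume]
    simp only [sub_eq_add_neg]
  rw [h1, integral_add_left_eq_self (heatKernel t) x, integral_hk ht]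

-- key pointwise bound
lemma hk_mul_exp_abs_le {t : ℝ} (ht : 0 < t) (x y : ℝ) :
    heatKernel t (x - y) * Real.exp |y| ≤
      (Real.sqrt (2 * Real.pi * t))⁻¹ * Real.exp (t / 2 + |x|) := by
  unfold heatKernel
  rw [mul_assoc, ← Real.exp_add]
  refine mul_le_mul_of_nonneg_left ?_ (by positivity)
  rw [Real.exp_le_exp]
  have h1 : |y| ≤ |x - y| + |x| := by
    have := abs_add_le (y - x) x
    simpa [abs_sub_comm] using this
  have expand : (x - y) ^ 2 / (2*t) - |x - y| + t/2 = (|x - y| - t) ^ 2 / (2*t) := by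
    have e2 : (|x - y| - t) ^ 2 = (x - y) ^ 2 - 2*t*|x - y| + t^2 := by
      rw [sub_sq, sq_abs]; ring
    rw [e2]; field_simp
  have h2 : 0 ≤ (|x - y| - t) ^ 2 / (2*t) := by positivity
  rw [← expand] at h2
  rw [neg_div]
  linarith

lemma hk_le_exp {t : ℝ} (ht : 0 < t) (x y : ℝ) :
    heatKernel t (x - y) ≤
      ((Real.sqrt (2 * Real.pi * t))⁻¹ * Real.exp (t / 2 + |x|)) * Real.exp (-|y|) := by
  have h := hk_mul_exp_abs_le ht x y
  have he : Real.exp |y| * Real.exp (-|y|) = 1 := by rw [← Real.exp_add]; simp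
  calc heatKernel t (x - y) = heatKernel t (x - y) * (Real.exp |y| * Real.exp (-|y|)) := by
        rw [he, mul_one]
    _ = (heatKernel t (x - y) * Real.exp |y|) * Real.exp (-|y|) := by ring
    _ ≤ _ := mul_le_mul_of_nonneg_right h (Real.exp_nonneg _)

variable {t : ℝ} {f : ℝ → ℝ}

lemma ix2 (ht : 0 < t) (hfm : Measurable f)
    (hfi : Integrable (fun x : ℝ => f x ^ 2 * Real.exp (-|x|))) (x : ℝ) : Integrable (fun y : ℝ => heatKernel t (x - y) * f y ^ 2) := by
  set C : ℝ := (Real.sqrt (2 * Real.pi * t))⁻¹ * Real.exp (t / 2 + |x|) with hC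
  refine (hfi.const_mul C).mono' ?_ ?_
  · exact (((hk_meas t).comp (measurable_const.sub measurable_id)).mul
      (hfm.pow_const 2)).aestronglyMeasurable
  filter_upwards with y
  rw [Real.norm_eq_abs, abs_of_nonneg (mul_nonneg (hk_nonneg _ _) (sq_nonneg _))]
  calc heatKernel t (x - y) * f y ^ 2
      ≤ (C * Real.exp (-|y|)) * f y ^ 2 :=
        mul_le_mul_of_nonneg_right (hk_le_exp ht x y) (sq_nonneg _)
    _ = C * (f y ^ 2 * Real.exp (-|y|)) := by ring

lemma ixf (ht : 0 < t) (hfm : Measurable f)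
    (hfi : Integrable (fun x : ℝ => f x ^ 2 * Real.exp (-|x|))) (x : ℝ) : Integrable (fun y : ℝ => heatKernel t (x - y) * f y) := by
  have hint := ((hk_shift_integrable ht x).add (ix2 ht hfm hfi x)).const_mul (2⁻¹ : ℝ)
  refine hint.mono' ?_ ?_
  · exact (((hk_meas t).comp (measurable_const.sub measurable_id)).mul
      hfm).aestronglyMeasurable
  filter_upwards with y
  rw [Real.norm_eq_abs, abs_mul, abs_of_nonneg (hk_nonneg _ _)]
  have h1 : |f y| ≤ (1 + f y ^ 2) / 2 := by nlinarith [sq_nonneg (|f y| - 1), sq_abs (f y)]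
  calc heatKernel t (x - y) * |f y| ≤ heatKernel t (x - y) * ((1 + f y ^ 2) / 2) :=
        mul_le_mul_of_nonneg_left h1 (hk_nonneg _ _)
    _ = 2⁻¹ * (heatKernel t (x - y) + heatKernel t (x - y) * f y ^ 2) := by ring

lemma jensen (ht : 0 < t) (hfm : Measurable f)
    (hfi : Integrable (fun x : ℝ => f x ^ 2 * Real.exp (-|x|))) (x : ℝ) :
    (∫ y : ℝ, heatKernel t (x - y) * f y) ^ 2 ≤ ∫ y : ℝ, heatKernel t (x - y) * f y ^ 2 := by
  set m : ℝ := ∫ y : ℝ, heatKernel t (x - y) * f y with hm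
  have h0 : 0 ≤ ∫ y : ℝ, heatKernel t (x - y) * (f y - m) ^ 2 :=
    integral_nonneg fun y => mul_nonneg (hk_nonneg _ _) (sq_nonneg _)
  have hptw : ∀ y : ℝ, heatKernel t (x - y) * (f y - m) ^ 2 =
      heatKernel t (x - y) * f y ^ 2 - (2 * m) * (heatKernel t (x - y) * f y)
        + m ^ 2 * heatKernel t (x - y) := fun y => by ring
  rw [show (fun y : ℝ => heatKernel t (x - y) * (f y - m) ^ 2) = fun y =>
      heatKernel t (x - y) * f y ^ 2 - (2 * m) * (heatKernel t (x - y) * f y)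
        + m ^ 2 * heatKernel t (x - y) from funext hptw] at h0
  have hA : Integrable (fun y : ℝ => heatKernel t (x - y) * f y ^ 2) := ix2 ht hfm hfi x
  have hB : Integrable (fun y : ℝ => 2 * m * (heatKernel t (x - y) * f y)) :=
    (ixf ht hfm hfi x).const_mul (2 * m)
  have hC : Integrable (fun y : ℝ => m ^ 2 * heatKernel t (x - y)) :=
    (hk_shift_integrable ht x).const_mul (m ^ 2)
  have hAB : Integrable (fun y : ℝ => heatKernel t (x - y) * f y ^ 2
      - 2 * m * (heatKernel t (x - y) * f y)) := hA.sub hB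
  simp only [integral_add hAB hC, integral_sub hA hB] at h0
  have hBv : ∫ y : ℝ, 2 * m * (heatKernel t (x - y) * f y) = 2 * m * m := by
    rw [MeasureTheory.integral_const_mul, ← hm]
  have hCv : ∫ y : ℝ, m ^ 2 * heatKernel t (x - y) = m ^ 2 := by
    rw [MeasureTheory.integral_const_mul, integral_hk_shift ht x, mul_one]
  rw [hBv, hCv] at h0
  nlinarith [h0]

lemma Iint_integrable (ht : 0 < t) :
    Integrable (fun z : ℝ => Real.exp |z| * heatKernel t z) := by
  refine (((integrable_exp_mul_abs_sub_sq (c := 1)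
    (show (0:ℝ) < (2*t)⁻¹ by positivity)).const_mul
      ((Real.sqrt (2 * Real.pi * t))⁻¹)).congr ?_)
  filter_upwards with z
  unfold heatKernel
  have h1 : 1 * |z| - (2*t)⁻¹ * z ^ 2 = |z| + -(z ^ 2) / (2*t) := by field_simp; ring
  rw [h1, Real.exp_add]
  ring

lemma weight_bound (ht : 0 < t) (y : ℝ) :
    ∫ x : ℝ, heatKernel t (x - y) * Real.exp (-|x|) ≤
      Real.exp (-|y|) * ∫ z : ℝ, Real.exp |z| * heatKernel t z := by
  have e1 : ∫ x : ℝ, heatKernel t (x - y) * Real.exp (-|x|)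
      = ∫ x : ℝ, heatKernel t x * Real.exp (-|x + y|) := by
    rw [← integral_add_right_eq_self (fun x => heatKernel t (x - y) * Real.exp (-|x|)) y]
    simp only [add_sub_cancel_right]
  rw [e1]
  have hL : Integrable (fun x : ℝ => heatKernel t x * Real.exp (-|x + y|)) := by
    refine (hk_integrable ht).mono' ?_ ?_
    · exact ((hk_meas t).mul
        (((measurable_id.add_const y).abs.neg).exp)).aestronglyMeasurable
    filter_upwards with x
    rw [Real.norm_eq_abs, abs_of_nonneg (mul_nonneg (hk_nonneg _ _) (Real.exp_nonneg _))]
    calc heatKernel t x * Real.exp (-|x + y|) ≤ heatKernel t x * 1 :=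
          mul_le_mul_of_nonneg_left (by
            exact Real.exp_le_one_iff.mpr (neg_nonpos.mpr (abs_nonneg _)))
            (hk_nonneg _ _)
      _ = heatKernel t x := mul_one _
  have hR : Integrable (fun x : ℝ => Real.exp (-|y|) * (Real.exp |x| * heatKernel t x)) :=
    (Iint_integrable ht).const_mul _
  calc ∫ x : ℝ, heatKernel t x * Real.exp (-|x + y|)
      ≤ ∫ x : ℝ, Real.exp (-|y|) * (Real.exp |x| * heatKernel t x) := by
        refine integral_mono hL hR fun x => ?_
        have h1 : |y| ≤ |x + y| + |x| := by
          have := abs_add_le (x + y) (-x)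
          simpa [abs_neg] using this
        have h2 : Real.exp (-|x + y|) ≤ Real.exp (-|y|) * Real.exp |x| := by
          rw [← Real.exp_add, Real.exp_le_exp]; linarith
        calc heatKernel t x * Real.exp (-|x + y|)
            ≤ heatKernel t x * (Real.exp (-|y|) * Real.exp |x|) :=
              mul_le_mul_of_nonneg_left h2 (hk_nonneg _ _)
          _ = Real.exp (-|y|) * (Real.exp |x| * heatKernel t x) := by ring
    _ = Real.exp (-|y|) * ∫ z : ℝ, Real.exp |z| * heatKernel t z := by
        rw [MeasureTheory.integral_const_mul]

lemma I_eq (ht : 0 < t) :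
    ∫ u : ℝ, Real.exp (Real.sqrt t * |u|) * heatKernel 1 u
      = ∫ z : ℝ, Real.exp |z| * heatKernel t z := by
  have hst : 0 < Real.sqrt t := Real.sqrt_pos.mpr ht
  have key := MeasureTheory.Measure.integral_comp_mul_left
    (fun z => Real.exp |z| * heatKernel t z) (Real.sqrt t)
  have hkk : ∀ u : ℝ, Real.exp |Real.sqrt t * u| * heatKernel t (Real.sqrt t * u)
      = (Real.sqrt t)⁻¹ * (Real.exp (Real.sqrt t * |u|) * heatKernel 1 u) := by
    intro u
    unfold heatKernel
    have h1 : |Real.sqrt t * u| = Real.sqrt t * |u| := by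
      rw [abs_mul, abs_of_nonneg hst.le]
    have h2 : -((Real.sqrt t * u) ^ 2) / (2*t) = -(u ^ 2) / (2*1) := by
      rw [mul_pow, Real.sq_sqrt ht.le]; field_simp
    have h3 : Real.sqrt (2 * Real.pi * t) = Real.sqrt (2 * Real.pi * 1) * Real.sqrt t := by
      rw [← Real.sqrt_mul (by positivity)]; ring_nf
    rw [h1, h2, h3, mul_inv]
    ring
  simp only [hkk] at key
  rw [MeasureTheory.integral_const_mul, abs_of_pos (inv_pos.mpr hst), smul_eq_mul] at key
  exact mul_left_cancel₀ (inv_ne_zero hst.ne') key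


/-- For every `t ≥ 0` the constant `K_{√t} = (∫ e^{√t·|z|} p_1(z) dz)^{1/2}` is finite, and
for every `f ∈ 𝒳₀ = L²(ℝ, e^{-|x|}dx)` the function `T_t f` belongs to `𝒳₀` with
`‖T_t f‖₀ ≤ K_{√t} ‖f‖₀`. -/
theorem heatOp_bounded_on_X0 (t : ℝ) (ht : 0 ≤ t) :
    Integrable (fun z : ℝ => Real.exp (Real.sqrt t * |z|) * heatKernel 1 z) ∧
    ∀ f : ℝ → ℝ, Measurable f →
      Integrable (fun x : ℝ => f x ^ 2 * Real.exp (-|x|)) →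
      Integrable (fun x : ℝ => heatOp t f x ^ 2 * Real.exp (-|x|)) ∧
      Real.sqrt (∫ x : ℝ, heatOp t f x ^ 2 * Real.exp (-|x|)) ≤
        Real.sqrt (∫ z : ℝ, Real.exp (Real.sqrt t * |z|) * heatKernel 1 z) *
          Real.sqrt (∫ x : ℝ, f x ^ 2 * Real.exp (-|x|)) := by
  have hK : Integrable (fun z : ℝ => Real.exp (Real.sqrt t * |z|) * heatKernel 1 z) := by
    refine ((integrable_exp_mul_abs_sub_sq (c := Real.sqrt t)
      (show (0:ℝ) < (2:ℝ)⁻¹ by norm_num)).const_mul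
        ((Real.sqrt (2 * Real.pi * 1))⁻¹)).congr ?_
    filter_upwards with z
    unfold heatKernel
    rw [show Real.sqrt t * |z| - (2:ℝ)⁻¹ * z ^ 2
        = Real.sqrt t * |z| + -(z ^ 2) / (2 * 1) by ring, Real.exp_add]
    ring
  refine ⟨hK, fun f hfm hfi => ?_⟩
  by_cases ht0 : t = 0
  · subst ht0
    have hval : ∫ z : ℝ, Real.exp (Real.sqrt 0 * |z|) * heatKernel 1 z = 1 := by
      simp only [Real.sqrt_zero, zero_mul, Real.exp_zero, one_mul]
      exact integral_hk one_pos
    have hop0 : heatOp 0 f = f := funext fun x => if_pos rfl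
    rw [hop0, hval, Real.sqrt_one, one_mul]
    exact ⟨hfi, le_refl _⟩
  -- main case t > 0
  have ht' : 0 < t := lt_of_le_of_ne ht (Ne.symm ht0)
  simp only [heatOp, if_neg ht0]
  set W : ℝ → ℝ := fun x => Real.exp (-|x|) with hW
  set I : ℝ := ∫ z : ℝ, Real.exp |z| * heatKernel t z with hI
  set S : ℝ := ∫ x : ℝ, f x ^ 2 * Real.exp (-|x|) with hS
  have hInn : 0 ≤ I := integral_nonneg fun z =>
    mul_nonneg (Real.exp_nonneg _) (hk_nonneg _ _)
  have hSnn : 0 ≤ S := integral_nonneg fun x =>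
    mul_nonneg (sq_nonneg _) (Real.exp_nonneg _)
  set Tf : ℝ → ℝ := fun x => ∫ y : ℝ, heatKernel t (x - y) * f y with hTf
  have hTm : StronglyMeasurable Tf := by
    have h : StronglyMeasurable (fun q : ℝ × ℝ => heatKernel t (q.1 - q.2) * f q.2) :=
      (((hk_meas t).comp (measurable_fst.sub measurable_snd)).mul
        (hfm.comp measurable_snd)).stronglyMeasurable
    exact h.integral_prod_right'
  set P : ℝ → ℝ → ENNReal :=
    fun x y => ENNReal.ofReal (heatKernel t (x - y) * f y ^ 2 * Real.exp (-|x|)) with hP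
  have hPm : AEMeasurable (Function.uncurry P) ((volume : Measure ℝ).prod volume) := by
    refine Measurable.aemeasurable ?_
    exact ((((hk_meas t).comp (measurable_fst.sub measurable_snd)).mul
      ((hfm.comp measurable_snd).pow_const 2)).mul
        ((measurable_fst.abs.neg).exp)).ennreal_ofReal
  -- inner lintegral in y, for fixed x
  have hGx : ∀ x : ℝ, ∫⁻ y : ℝ, P x y
      = ENNReal.ofReal (∫ y : ℝ, heatKernel t (x - y) * f y ^ 2)
        * ENNReal.ofReal (Real.exp (-|x|)) := by
    intro x
    have e1 : ∀ y : ℝ, P x y = ENNReal.ofReal (heatKernel t (x - y) * f y ^ 2)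
        * ENNReal.ofReal (Real.exp (-|x|)) := fun y => by
      rw [hP, ← ENNReal.ofReal_mul (mul_nonneg (hk_nonneg _ _) (sq_nonneg _))]
    simp only [e1]
    rw [lintegral_mul_const' _ _ ENNReal.ofReal_ne_top,
      ofReal_integral_eq_lintegral_ofReal (ix2 ht' hfm hfi x)
        (Filter.Eventually.of_forall fun y => mul_nonneg (hk_nonneg _ _) (sq_nonneg _))]
  -- pointwise Jensen step
  have step1 : ∀ x : ℝ, ENNReal.ofReal (Tf x ^ 2 * Real.exp (-|x|)) ≤ ∫⁻ y : ℝ, P x y := by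
    intro x
    rw [hGx x, ENNReal.ofReal_mul (sq_nonneg _)]
    exact mul_le_mul_left (ENNReal.ofReal_le_ofReal (jensen ht' hfm hfi x)) _
  -- inner lintegral in x, for fixed y
  have inner2 : ∀ y : ℝ, ∫⁻ x : ℝ, P x y
      ≤ ENNReal.ofReal (f y ^ 2) * ENNReal.ofReal (Real.exp (-|y|) * I) := by
    intro y
    have e1 : ∀ x : ℝ, P x y = ENNReal.ofReal (f y ^ 2)
        * ENNReal.ofReal (heatKernel t (x - y) * Real.exp (-|x|)) := fun x => by
      rw [hP, ← ENNReal.ofReal_mul (sq_nonneg _)]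
      congr 1
      ring
    simp only [e1]
    rw [lintegral_const_mul' _ _ ENNReal.ofReal_ne_top]
    refine mul_le_mul_right ?_ _
    have hLx : Integrable (fun x : ℝ => heatKernel t (x - y) * Real.exp (-|x|)) := by
      refine ((hk_integrable ht').comp_sub_right y).mono' ?_ ?_
      · exact (((hk_meas t).comp (measurable_id.sub_const y)).mul
          ((measurable_abs.neg).exp)).aestronglyMeasurable
      filter_upwards with x
      rw [Real.norm_eq_abs, abs_of_nonneg (mul_nonneg (hk_nonneg _ _) (Real.exp_nonneg _))]
      calc heatKernel t (x - y) * Real.exp (-|x|) ≤ heatKernel t (x - y) * 1 :=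
            mul_le_mul_of_nonneg_left
              (Real.exp_le_one_iff.mpr (neg_nonpos.mpr (abs_nonneg _))) (hk_nonneg _ _)
        _ = heatKernel t (x - y) := mul_one _
    rw [← ofReal_integral_eq_lintegral_ofReal hLx
      (Filter.Eventually.of_forall fun x => mul_nonneg (hk_nonneg _ _) (Real.exp_nonneg _))]
    exact ENNReal.ofReal_le_ofReal (weight_bound ht' y)
  -- the full chain
  have chain : ∫⁻ x : ℝ, ENNReal.ofReal (Tf x ^ 2 * Real.exp (-|x|))
      ≤ ENNReal.ofReal (I * S) := by
    calc ∫⁻ x : ℝ, ENNReal.ofReal (Tf x ^ 2 * Real.exp (-|x|))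
        ≤ ∫⁻ x : ℝ, ∫⁻ y : ℝ, P x y := lintegral_mono step1
      _ = ∫⁻ y : ℝ, ∫⁻ x : ℝ, P x y := lintegral_lintegral_swap hPm
      _ ≤ ∫⁻ y : ℝ, ENNReal.ofReal (f y ^ 2) * ENNReal.ofReal (Real.exp (-|y|) * I) :=
          lintegral_mono inner2
      _ = ∫⁻ y : ℝ, ENNReal.ofReal I * ENNReal.ofReal (f y ^ 2 * Real.exp (-|y|)) := by
          congr 1
          funext y
          rw [← ENNReal.ofReal_mul (sq_nonneg _), ← ENNReal.ofReal_mul hInn]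
          congr 1
          ring
      _ = ENNReal.ofReal I * ∫⁻ y : ℝ, ENNReal.ofReal (f y ^ 2 * Real.exp (-|y|)) :=
          lintegral_const_mul' _ _ ENNReal.ofReal_ne_top
      _ = ENNReal.ofReal I * ENNReal.ofReal S := by
          rw [← ofReal_integral_eq_lintegral_ofReal hfi
            (Filter.Eventually.of_forall fun y => mul_nonneg (sq_nonneg _) (Real.exp_nonneg _))]
      _ = ENNReal.ofReal (I * S) := (ENNReal.ofReal_mul hInn).symm
  have hφnn : (0:ℝ → ℝ) ≤ᵐ[volume] fun x => Tf x ^ 2 * Real.exp (-|x|) :=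
    Filter.Eventually.of_forall fun x => mul_nonneg (sq_nonneg _) (Real.exp_nonneg _)
  have hφm : AEStronglyMeasurable (fun x : ℝ => Tf x ^ 2 * Real.exp (-|x|)) volume :=
    ((hTm.measurable.pow_const 2).mul ((measurable_abs.neg).exp)).aestronglyMeasurable
  have hint : Integrable (fun x : ℝ => Tf x ^ 2 * Real.exp (-|x|)) := by
    refine ⟨hφm, ?_⟩
    rw [hasFiniteIntegral_iff_ofReal hφnn]
    exact lt_of_le_of_lt chain ENNReal.ofReal_lt_top
  refine ⟨hint, ?_⟩
  have hIB : ∫ x : ℝ, Tf x ^ 2 * Real.exp (-|x|) ≤ I * S := by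
    have h1 : ENNReal.ofReal (∫ x : ℝ, Tf x ^ 2 * Real.exp (-|x|))
        ≤ ENNReal.ofReal (I * S) := by
      rw [ofReal_integral_eq_lintegral_ofReal hint hφnn]
      exact chain
    exact (ENNReal.ofReal_le_ofReal_iff (mul_nonneg hInn hSnn)).mp h1
  rw [I_eq ht']
  calc Real.sqrt (∫ x : ℝ, Tf x ^ 2 * Real.exp (-|x|)) ≤ Real.sqrt (I * S) :=
        Real.sqrt_le_sqrt hIB
    _ = Real.sqrt I * Real.sqrt S := Real.sqrt_mul hInn S
end

section
/- The heat semigroup is strongly continuous on 𝒳₀: for every f ∈ 𝒳₀, ‖T_t f − f‖₀ → 0 as t → 0⁺. -/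
open MeasureTheory Real Filter Topology
open scoped ENNReal

lemma continuous_heatKernel_one : Continuous (heatKernel 1) := by
  unfold heatKernel
  fun_prop

lemma heatKernel_one_nonneg (u : ℝ) : 0 ≤ heatKernel 1 u := by
  unfold heatKernel
  positivity

lemma integrable_hk_exp (c : ℝ) (hc : 0 ≤ c) :
    Integrable (fun u : ℝ => heatKernel 1 u * Real.exp (c * |u|)) := by
  have hb : Integrable (fun u : ℝ => ((Real.sqrt (2 * Real.pi))⁻¹ * Real.exp (c ^ 2)) *
      Real.exp (-(4⁻¹ : ℝ) * u ^ 2)) :=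
    (integrable_exp_neg_mul_sq (by norm_num : (0:ℝ) < 4⁻¹)).const_mul _
  refine hb.mono' ?_ ?_
  · exact (continuous_heatKernel_one.mul (Real.continuous_exp.comp
      (continuous_const.mul continuous_abs))).aestronglyMeasurable
  · refine Eventually.of_forall fun u => ?_
    have h0 : 0 ≤ heatKernel 1 u * Real.exp (c * |u|) :=
      mul_nonneg (heatKernel_one_nonneg u) (Real.exp_pos _).le
    rw [Real.norm_of_nonneg h0]
    unfold heatKernel
    rw [mul_assoc, ← Real.exp_add]
    calc (Real.sqrt (2 * Real.pi * 1))⁻¹ * Real.exp (-(u ^ 2) / (2 * 1) + c * |u|)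
        ≤ (Real.sqrt (2 * Real.pi))⁻¹ * Real.exp (c ^ 2 + -4⁻¹ * u ^ 2) := by
          rw [mul_one]
          refine mul_le_mul_of_nonneg_left (Real.exp_le_exp.2 ?_) (by positivity)
          nlinarith [sq_nonneg (|u| / 2 - c), sq_abs u]
      _ = (Real.sqrt (2 * Real.pi))⁻¹ * Real.exp (c ^ 2) * Real.exp (-4⁻¹ * u ^ 2) := by
          rw [Real.exp_add]; ring

lemma integrable_hk : Integrable (heatKernel 1) := by
  have := integrable_hk_exp 0 le_rfl
  simpa using this

lemma integral_hk_s2 : ∫ u : ℝ, heatKernel 1 u = 1 := by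
  have h : ∫ u : ℝ, Real.exp (-(2⁻¹:ℝ) * u ^ 2) = Real.sqrt (Real.pi / 2⁻¹) :=
    integral_gaussian 2⁻¹
  have h2 : ∫ u : ℝ, heatKernel 1 u
      = (Real.sqrt (2 * Real.pi))⁻¹ * ∫ u : ℝ, Real.exp (-(2⁻¹:ℝ) * u ^ 2) := by
    rw [← integral_const_mul]
    congr 1 with u
    unfold heatKernel
    rw [mul_one]
    congr 1
    ring
  rw [h2, h]
  have h3 : Real.pi / 2⁻¹ = 2 * Real.pi := by ring
  rw [h3, inv_mul_cancel₀]
  positivity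

lemma integrable_hk_mul {ψ : ℝ → ℝ} (hψ : AEStronglyMeasurable ψ volume)
    (h2 : Integrable (fun u => heatKernel 1 u * ψ u ^ 2)) :
    Integrable (fun u => heatKernel 1 u * ψ u) := by
  refine (integrable_hk.add h2).mono'
    (continuous_heatKernel_one.aestronglyMeasurable.mul hψ)
    (Eventually.of_forall fun u => ?_)
  have hP := heatKernel_one_nonneg u
  have habs : |ψ u| ≤ 1 + ψ u ^ 2 := by nlinarith [sq_nonneg (|ψ u| - 1), sq_abs (ψ u)]
  have h0 : ‖heatKernel 1 u * ψ u‖ = heatKernel 1 u * |ψ u| := by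
    rw [Real.norm_eq_abs, abs_mul, abs_of_nonneg hP]
  rw [h0]
  simp only [Pi.add_apply]
  nlinarith [mul_le_mul_of_nonneg_left habs hP]

lemma jensen_sq {ψ : ℝ → ℝ} (hψ : AEStronglyMeasurable ψ volume)
    (h2 : Integrable (fun u => heatKernel 1 u * ψ u ^ 2)) :
    (∫ u : ℝ, heatKernel 1 u * ψ u) ^ 2 ≤ ∫ u : ℝ, heatKernel 1 u * ψ u ^ 2 := by
  set a : ℝ → ℝ := fun u => Real.sqrt (heatKernel 1 u) with ha_def
  set b : ℝ → ℝ := fun u => Real.sqrt (heatKernel 1 u) * |ψ u| with hb_def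
  have ha2 : ∀ u, a u ^ 2 = heatKernel 1 u := fun u => Real.sq_sqrt (heatKernel_one_nonneg u)
  have hb2 : ∀ u, b u ^ 2 = heatKernel 1 u * ψ u ^ 2 := fun u => by
    rw [hb_def]; rw [mul_pow, Real.sq_sqrt (heatKernel_one_nonneg u), sq_abs]
  have hma : AEStronglyMeasurable a volume :=
    (Real.continuous_sqrt.comp continuous_heatKernel_one).aestronglyMeasurable
  have hmb : AEStronglyMeasurable b volume := (hma.mul hψ.norm).congr (Eventually.of_forall fun u => by simp [hb_def, ha_def, Real.norm_eq_abs])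
  have hMa : MemLp a 2 volume := (memLp_two_iff_integrable_sq hma).2 (by
    refine integrable_hk.congr (Eventually.of_forall fun u => (ha2 u).symm))
  have hMb : MemLp b 2 volume := (memLp_two_iff_integrable_sq hmb).2 (by
    refine h2.congr (Eventually.of_forall fun u => (hb2 u).symm))
  have hconj : Real.HolderConjugate 2 2 := Real.HolderConjugate.two_two
  have h22 : (ENNReal.ofReal (2:ℝ)) = 2 := by norm_num
  have hH := integral_mul_le_Lp_mul_Lq_of_nonneg hconj
    (Eventually.of_forall fun u => Real.sqrt_nonneg _)
    (Eventually.of_forall fun u => mul_nonneg (Real.sqrt_nonneg _) (abs_nonneg _))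
    (h22 ▸ hMa) (h22 ▸ hMb)
  have hI0 : 0 ≤ ∫ u : ℝ, heatKernel 1 u * ψ u ^ 2 :=
    integral_nonneg fun u => mul_nonneg (heatKernel_one_nonneg u) (sq_nonneg _)
  have hrw1 : ∫ u : ℝ, a u ^ (2:ℝ) = 1 := by
    rw [← integral_hk_s2]; congr 1 with u; rw [Real.rpow_two, ha2 u]
  have hrw2 : ∫ u : ℝ, b u ^ (2:ℝ) = ∫ u : ℝ, heatKernel 1 u * ψ u ^ 2 := by
    congr 1 with u; rw [Real.rpow_two, hb2 u]
  rw [hrw1, hrw2] at hH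
  have hab : ∀ u, a u * b u = ‖heatKernel 1 u * ψ u‖ := fun u => by
    rw [Real.norm_eq_abs, abs_mul, abs_of_nonneg (heatKernel_one_nonneg u), ha_def, hb_def]
    dsimp only
    rw [← mul_assoc, Real.mul_self_sqrt (heatKernel_one_nonneg u)]
  have h1 : |∫ u : ℝ, heatKernel 1 u * ψ u| ≤
      (∫ u : ℝ, heatKernel 1 u * ψ u ^ 2) ^ ((1:ℝ)/2) := by
    calc |∫ u : ℝ, heatKernel 1 u * ψ u| ≤ ∫ u : ℝ, ‖heatKernel 1 u * ψ u‖ := by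
          simpa [Real.norm_eq_abs] using
            norm_integral_le_integral_norm (fun u : ℝ => heatKernel 1 u * ψ u)
      _ = ∫ u : ℝ, a u * b u := by congr 1 with u; rw [hab u]
      _ ≤ 1 ^ ((1:ℝ)/2) * (∫ u : ℝ, heatKernel 1 u * ψ u ^ 2) ^ ((1:ℝ)/2) := hH
      _ = (∫ u : ℝ, heatKernel 1 u * ψ u ^ 2) ^ ((1:ℝ)/2) := by
          rw [Real.one_rpow, one_mul]
  have h2' := pow_le_pow_left₀ (abs_nonneg _) h1 2
  rw [sq_abs] at h2'
  calc (∫ u : ℝ, heatKernel 1 u * ψ u) ^ 2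
      ≤ ((∫ u : ℝ, heatKernel 1 u * ψ u ^ 2) ^ ((1:ℝ)/2)) ^ 2 := h2'
    _ = ∫ u : ℝ, heatKernel 1 u * ψ u ^ 2 := by
        rw [← Real.rpow_natCast (_ ^ ((1:ℝ)/2)) 2, ← Real.rpow_mul hI0]
        norm_num

noncomputable def gw (f : ℝ → ℝ) (x : ℝ) : ℝ := f x * Real.exp (-|x| / 2)

lemma gw_sq (f : ℝ → ℝ) (x : ℝ) : gw f x ^ 2 = f x ^ 2 * Real.exp (-|x|) := by
  unfold gw
  rw [mul_pow, ← Real.exp_nat_mul]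
  congr 1
  push_cast
  ring

lemma measurable_gw {f : ℝ → ℝ} (hf : Measurable f) : Measurable (gw f) := by
  unfold gw
  fun_prop

lemma integrable_gw_sq {f : ℝ → ℝ}
    (hf2 : Integrable (fun x : ℝ => f x ^ 2 * Real.exp (-|x|))) :
    Integrable (fun x : ℝ => gw f x ^ 2) :=
  hf2.congr (Eventually.of_forall fun x => (gw_sq f x).symm)

noncomputable def Gfn (f : ℝ → ℝ) (z : ℝ) : ℝ :=
  ∫ x : ℝ, (f (x - z) - f x) ^ 2 * Real.exp (-|x|)

lemma Gfn_nonneg (f : ℝ → ℝ) (z : ℝ) : 0 ≤ Gfn f z :=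
  integral_nonneg fun x => mul_nonneg (sq_nonneg _) (Real.exp_pos _).le

lemma ptwise (f : ℝ → ℝ) (z x : ℝ) :
    (f (x - z) - f x) ^ 2 * Real.exp (-|x|) ≤
      2 * Real.exp |z| * gw f (x - z) ^ 2 + 2 * gw f x ^ 2 := by
  have h1 : Real.exp (-|x|) ≤ Real.exp |z| * Real.exp (-|x - z|) := by
    rw [← Real.exp_add]
    apply Real.exp_le_exp.2
    have h2 : |x - z| ≤ |x| + |z| := abs_sub x z
    linarith
  rw [gw_sq, gw_sq]
  have key : (f (x - z) - f x) ^ 2 * Real.exp (-|x|) ≤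
      2 * (f (x - z) ^ 2 * Real.exp (-|x|)) + 2 * (f x ^ 2 * Real.exp (-|x|)) := by
    nlinarith [mul_nonneg (sq_nonneg (f (x - z) + f x)) (Real.exp_pos (-|x|)).le]
  have key2 : f (x - z) ^ 2 * Real.exp (-|x|) ≤
      Real.exp |z| * (f (x - z) ^ 2 * Real.exp (-|x - z|)) := by
    nlinarith [mul_le_mul_of_nonneg_left h1 (sq_nonneg (f (x - z)))]
  linarith

lemma Gfn_le {f : ℝ → ℝ}
    (hf2 : Integrable (fun x : ℝ => f x ^ 2 * Real.exp (-|x|))) (z : ℝ) :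
    Gfn f z ≤ (2 * Real.exp |z| + 2) * ∫ x : ℝ, f x ^ 2 * Real.exp (-|x|) := by
  have hgsq := integrable_gw_sq hf2
  have hK : ∫ x : ℝ, gw f x ^ 2 = ∫ x : ℝ, f x ^ 2 * Real.exp (-|x|) := by
    congr 1 with x; exact gw_sq f x
  have hshift : Integrable (fun x : ℝ => gw f (x - z) ^ 2) := hgsq.comp_sub_right z
  have hint : Integrable (fun x : ℝ =>
      2 * Real.exp |z| * gw f (x - z) ^ 2 + 2 * gw f x ^ 2) :=
    (hshift.const_mul _).add (hgsq.const_mul _)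
  refine le_trans (integral_mono_of_nonneg
    (Eventually.of_forall fun x => mul_nonneg (sq_nonneg _) (Real.exp_pos _).le)
    hint (Eventually.of_forall fun x => ptwise f z x)) ?_
  rw [integral_add (hshift.const_mul _) (hgsq.const_mul _), integral_const_mul,
    integral_const_mul, integral_sub_right_eq_self (fun x : ℝ => gw f x ^ 2) z, hK]
  exact le_of_eq (by ring)

lemma Gfn_meas {f : ℝ → ℝ} (hf : Measurable f) : Measurable (Gfn f) := by
  have hsm : StronglyMeasurable
      (Function.uncurry fun z x : ℝ => (f (x - z) - f x) ^ 2 * Real.exp (-|x|)) := by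
    apply Measurable.stronglyMeasurable
    apply Measurable.mul
    · exact ((hf.comp (measurable_snd.sub measurable_fst)).sub (hf.comp measurable_snd)).pow_const 2
    · exact (measurable_snd.abs.neg).exp
  exact hsm.integral_prod_right.measurable

lemma ptwise2 (f : ℝ → ℝ) (z x : ℝ) :
    (f (x - z) - f x) ^ 2 * Real.exp (-|x|) ≤
      2 * (Real.exp (|z| / 2) - 1) ^ 2 * gw f (x - z) ^ 2 +
        2 * (gw f (x - z) - gw f x) ^ 2 := by
  set A : ℝ := f (x - z) * Real.exp (-|x| / 2) - gw f (x - z) with hA_def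
  set B : ℝ := gw f (x - z) - gw f x with hB_def
  have hsum : (f (x - z) - f x) ^ 2 * Real.exp (-|x|) = (A + B) ^ 2 := by
    have : A + B = (f (x - z) - f x) * Real.exp (-|x| / 2) := by
      rw [hA_def, hB_def]; unfold gw; ring
    rw [this, mul_pow, sq (Real.exp (-|x| / 2)), ← Real.exp_add]
    congr 2
    ring
  have ha : A = gw f (x - z) * (Real.exp ((|x - z| - |x|) / 2) - 1) := by
    rw [hA_def]
    unfold gw
    rw [mul_sub, mul_one, mul_assoc, ← Real.exp_add]
    congr 3
    ring
  have habs : |x - z| - |x| ≤ |z| ∧ |x| - |x - z| ≤ |z| := by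
    constructor
    · have : |x - z| ≤ |x| + |z| := abs_sub x z
      linarith
    · have : |x| = |x - z + z| := by ring_nf
      rw [this]
      have := abs_add_le (x - z) z
      linarith
  have hE : |Real.exp ((|x - z| - |x|) / 2) - 1| ≤ Real.exp (|z| / 2) - 1 := by
    rw [abs_le]
    constructor
    · have h1 : Real.exp (-(|z| / 2)) ≤ Real.exp ((|x - z| - |x|) / 2) :=
        Real.exp_le_exp.2 (by linarith [habs.2])
      have h2 : 1 - |z| / 2 ≤ Real.exp (-(|z| / 2)) := by
        have := Real.add_one_le_exp (-(|z| / 2)); linarith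
      have h3 : 1 + |z| / 2 ≤ Real.exp (|z| / 2) := by
        have := Real.add_one_le_exp (|z| / 2); linarith
      linarith
    · have h1 : Real.exp ((|x - z| - |x|) / 2) ≤ Real.exp (|z| / 2) :=
        Real.exp_le_exp.2 (by linarith [habs.1])
      linarith
  have hA2 : A ^ 2 ≤ (Real.exp (|z| / 2) - 1) ^ 2 * gw f (x - z) ^ 2 := by
    rw [ha, mul_pow]
    have h4 : (Real.exp ((|x - z| - |x|) / 2) - 1) ^ 2 ≤ (Real.exp (|z| / 2) - 1) ^ 2 := by
      rw [← sq_abs (Real.exp ((|x - z| - |x|) / 2) - 1)]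
      apply pow_le_pow_left₀ (abs_nonneg _) hE
    nlinarith [sq_nonneg (gw f (x - z))]
  rw [hsum]
  have h5 : (A + B) ^ 2 ≤ 2 * A ^ 2 + 2 * B ^ 2 := by nlinarith [sq_nonneg (A - B)]
  have h6 : 2 * A ^ 2 ≤ 2 * ((Real.exp (|z| / 2) - 1) ^ 2 * gw f (x - z) ^ 2) := by linarith
  calc (A + B) ^ 2 ≤ 2 * A ^ 2 + 2 * B ^ 2 := h5
    _ ≤ 2 * ((Real.exp (|z| / 2) - 1) ^ 2 * gw f (x - z) ^ 2) + 2 * B ^ 2 := by linarith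
    _ = 2 * (Real.exp (|z| / 2) - 1) ^ 2 * gw f (x - z) ^ 2 + 2 * B ^ 2 := by ring

lemma Gfn_tendsto {f : ℝ → ℝ} (hf : Measurable f)
    (hf2 : Integrable (fun x : ℝ => f x ^ 2 * Real.exp (-|x|))) :
    Tendsto (Gfn f) (𝓝 0) (𝓝 0) := by
  haveI : Fact ((1 : ℝ≥0∞) ≤ 2) := ⟨one_le_two⟩
  have hgw_meas : Measurable (gw f) := measurable_gw hf
  have hg2 : MemLp (gw f) 2 (volume : Measure ℝ) :=
    (memLp_two_iff_integrable_sq hgw_meas.aestronglyMeasurable).2 (integrable_gw_sq hf2)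
  set G₂ : Lp ℝ 2 (volume : Measure ℝ) := hg2.toLp (gw f) with hG₂_def
  set cm : ℝ → C(ℝ, ℝ) := fun z => ⟨fun x => x - z, by continuity⟩ with hcm_def
  have hcm : Continuous cm := by
    apply ContinuousMap.continuous_of_continuous_uncurry
    exact continuous_snd.sub continuous_fst
  have hmp : ∀ z : ℝ, MeasurePreserving (cm z) volume volume := fun z =>
    measurePreserving_sub_right volume z
  set T : ℝ → Lp ℝ 2 (volume : Measure ℝ) := fun z =>
    Lp.compMeasurePreserving (cm z) (hmp z) G₂ with hT_def
  have hT : Tendsto T (𝓝 0) (𝓝 (T 0)) :=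
    Filter.Tendsto.compMeasurePreservingLp tendsto_const_nhds (hcm.tendsto 0) hmp (hmp 0)
      ENNReal.ofNat_ne_top
  have hnorm : Tendsto (fun z => ‖T z - T 0‖ ^ 2) (𝓝 0) (𝓝 0) := by
    have h1 : Tendsto (fun z => T z - T 0) (𝓝 0) (𝓝 (T 0 - T 0)) := hT.sub tendsto_const_nhds
    rw [sub_self] at h1
    simpa using h1.norm.pow 2
  set K : ℝ := ∫ x : ℝ, gw f x ^ 2 with hK_def
  -- coeFn facts
  have hTz : ∀ z : ℝ, (T z : ℝ → ℝ) =ᵐ[volume] fun x => gw f (x - z) := by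
    intro z
    have e1 := Lp.coeFn_compMeasurePreserving G₂ (hmp z)
    have e2 : ((G₂ : ℝ → ℝ) ∘ (cm z)) =ᵐ[volume] ((gw f) ∘ (cm z)) :=
      (hmp z).quasiMeasurePreserving.ae_eq_comp (MemLp.coeFn_toLp hg2)
    exact e1.trans e2
  have hVae : ∀ z : ℝ, ((T z - T 0 : Lp ℝ 2 (volume : Measure ℝ)) : ℝ → ℝ) =ᵐ[volume]
      fun x => gw f (x - z) - gw f x := by
    intro z
    have h0 : (T 0 : ℝ → ℝ) =ᵐ[volume] gw f :=
      (hTz 0).trans (Eventually.of_forall fun x => by simp)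
    exact (Lp.coeFn_sub (T z) (T 0)).trans (((hTz z).sub h0))
  have hVsq : ∀ z : ℝ, ∫ x : ℝ, (gw f (x - z) - gw f x) ^ 2 = ‖T z - T 0‖ ^ 2 := by
    intro z
    set V := T z - T 0 with hV_def
    rw [← real_inner_self_eq_norm_sq V, L2.inner_def]
    have : ∀ a : ℝ, (inner ℝ a a : ℝ) = a ^ 2 := fun a => by
      simp [real_inner_comm]
    rw [show (fun x => (inner ℝ (V x) (V x) : ℝ)) = fun x => (V x) ^ 2 from funext fun x => this _]
    exact (integral_congr_ae ((hVae z).mono fun x hx => by rw [hx])).symm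
  have hVsq_int : ∀ z : ℝ, Integrable (fun x : ℝ => (gw f (x - z) - gw f x) ^ 2) := by
    intro z
    exact ((Lp.memLp (T z - T 0)).integrable_sq).congr
      ((hVae z).mono fun x hx => by dsimp only; rw [hx])
  -- upper bound
  have hup : ∀ z : ℝ, Gfn f z ≤
      2 * (Real.exp (|z| / 2) - 1) ^ 2 * K + 2 * ‖T z - T 0‖ ^ 2 := by
    intro z
    have hgsq := integrable_gw_sq hf2
    have hshift : Integrable (fun x : ℝ => gw f (x - z) ^ 2) := hgsq.comp_sub_right z
    have hint : Integrable (fun x : ℝ =>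
        2 * (Real.exp (|z| / 2) - 1) ^ 2 * gw f (x - z) ^ 2 +
          2 * (gw f (x - z) - gw f x) ^ 2) :=
      (hshift.const_mul _).add ((hVsq_int z).const_mul _)
    refine le_trans (integral_mono_of_nonneg
      (Eventually.of_forall fun x => mul_nonneg (sq_nonneg _) (Real.exp_pos _).le)
      hint (Eventually.of_forall fun x => ptwise2 f z x)) ?_
    rw [integral_add (hshift.const_mul _) ((hVsq_int z).const_mul _), integral_const_mul,
      integral_const_mul, integral_sub_right_eq_self (fun x : ℝ => gw f x ^ 2) z, hVsq z,
      ← hK_def]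
  -- combined bound tends to 0
  have t1 : Tendsto (fun z : ℝ => 2 * (Real.exp (|z| / 2) - 1) ^ 2 * K) (𝓝 0) (𝓝 0) := by
    have hc : Continuous (fun z : ℝ => 2 * (Real.exp (|z| / 2) - 1) ^ 2 * K) :=
      (continuous_const.mul (((Real.continuous_exp.comp
        (continuous_abs.div_const 2)).sub continuous_const).pow 2)).mul continuous_const
    have := hc.tendsto' 0 0 (by simp)
    exact this
  have t2 : Tendsto (fun z : ℝ => 2 * ‖T z - T 0‖ ^ 2) (𝓝 0) (𝓝 0) := by
    have := hnorm.const_mul 2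
    simpa using this
  have tcomb : Tendsto (fun z : ℝ =>
      2 * (Real.exp (|z| / 2) - 1) ^ 2 * K + 2 * ‖T z - T 0‖ ^ 2) (𝓝 0) (𝓝 0) := by
    have := t1.add t2
    simpa using this
  exact tendsto_of_tendsto_of_tendsto_of_le_of_le tendsto_const_nhds tcomb
    (fun z => Gfn_nonneg f z) hup

/-- Strong continuity of the heat semigroup on `𝒳₀ = L²(ℝ, e^{-|x|}dx)`:
for every `f ∈ 𝒳₀`, `‖T_t f − f‖₀ → 0` as `t → 0⁺`. -/
theorem heatOp_strongly_continuous (f : ℝ → ℝ) (hf : Measurable f)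
    (hf2 : Integrable (fun x : ℝ => f x ^ 2 * Real.exp (-|x|))) :
    Tendsto (fun t : ℝ => Real.sqrt (∫ x : ℝ, (heatOp t f x - f x) ^ 2 * Real.exp (-|x|)))
      (𝓝[>] 0) (𝓝 0) := by
  set K : ℝ := ∫ x : ℝ, f x ^ 2 * Real.exp (-|x|) with hK_def
  have hK0 : 0 ≤ K :=
    integral_nonneg fun x => mul_nonneg (sq_nonneg _) (Real.exp_pos _).le
  set D : ℝ → ℝ := fun t => ∫ x : ℝ, (heatOp t f x - f x) ^ 2 * Real.exp (-|x|) with hD_def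
  set M : ℝ → ℝ := fun t => ∫ u : ℝ, heatKernel 1 u * Gfn f (Real.sqrt t * u) with hM_def
  suffices hD : Tendsto D (𝓝[>] 0) (𝓝 0) by
    have := (Real.continuous_sqrt.tendsto' 0 0 Real.sqrt_zero).comp hD
    exact this
  have hDl : ∀ t : ℝ, 0 ≤ D t := fun t =>
    integral_nonneg fun x => mul_nonneg (sq_nonneg _) (Real.exp_pos _).le
  -- dominated convergence for M
  have hM : Tendsto M (𝓝[>] 0) (𝓝 0) := by
    suffices h : Tendsto (fun t : ℝ => ∫ u : ℝ, heatKernel 1 u * Gfn f (Real.sqrt t * u))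
        (𝓝[>] 0) (𝓝 (∫ u : ℝ, (0:ℝ))) by
      rw [hM_def]; simpa using h
    refine tendsto_integral_filter_of_dominated_convergence
      (fun u => heatKernel 1 u * ((2 * Real.exp |u| + 2) * K)) ?_ ?_ ?_ ?_
    · refine Eventually.of_forall fun t => ?_
      exact (continuous_heatKernel_one.measurable.mul
        ((Gfn_meas hf).comp (measurable_id.const_mul (Real.sqrt t)))).aestronglyMeasurable
    · filter_upwards [Ioc_mem_nhdsGT_of_mem (Set.mem_Ico.2 ⟨le_refl (0:ℝ), zero_lt_one⟩)]
        with t ht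
      refine Eventually.of_forall fun u => ?_
      have hnn : 0 ≤ heatKernel 1 u * Gfn f (Real.sqrt t * u) :=
        mul_nonneg (heatKernel_one_nonneg u) (Gfn_nonneg f _)
      rw [Real.norm_of_nonneg hnn]
      have h1 : Gfn f (Real.sqrt t * u) ≤ (2 * Real.exp |Real.sqrt t * u| + 2) * K :=
        Gfn_le hf2 _
      have h2 : |Real.sqrt t * u| ≤ |u| := by
        rw [abs_mul, abs_of_nonneg (Real.sqrt_nonneg t)]
        calc Real.sqrt t * |u| ≤ 1 * |u| := by
              apply mul_le_mul_of_nonneg_right _ (abs_nonneg u)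
              exact Real.sqrt_le_one.2 ht.2
          _ = |u| := one_mul _
      have h3 : (2 * Real.exp |Real.sqrt t * u| + 2) * K ≤ (2 * Real.exp |u| + 2) * K := by
        apply mul_le_mul_of_nonneg_right _ hK0
        have := Real.exp_le_exp.2 h2
        linarith
      exact mul_le_mul_of_nonneg_left (h1.trans h3) (heatKernel_one_nonneg u)
    · have hb : Integrable (fun u : ℝ =>
          (2 * K) * (heatKernel 1 u * Real.exp (1 * |u|)) + (2 * K) * heatKernel 1 u) :=
        ((integrable_hk_exp 1 zero_le_one).const_mul _).add (integrable_hk.const_mul _)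
      refine hb.congr (Eventually.of_forall fun u => ?_)
      dsimp only
      rw [one_mul]
      ring
    · refine Eventually.of_forall fun u => ?_
      have h1 : Tendsto (fun t : ℝ => Real.sqrt t * u) (𝓝[>] 0) (𝓝 0) := by
        have := ((Real.continuous_sqrt.tendsto' 0 0 Real.sqrt_zero).mono_left
          (nhdsWithin_le_nhds : 𝓝[>] (0:ℝ) ≤ 𝓝 0)).mul_const u
        simpa using this
      have h2 := (Gfn_tendsto hf hf2).comp h1
      have h3 := h2.const_mul (heatKernel 1 u)
      simpa using h3
  -- the key estimate
  have hDu : ∀ᶠ t in 𝓝[>] (0:ℝ), D t ≤ M t := by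
    filter_upwards [self_mem_nhdsWithin] with t ht
    replace ht : (0:ℝ) < t := ht
    have ht0 : t ≠ 0 := ne_of_gt ht
    set s : ℝ := Real.sqrt t with hs_def
    have hs : 0 < s := Real.sqrt_pos.2 ht
    have hs2 : s ^ 2 = t := Real.sq_sqrt ht.le
    -- scaling identity
    have hscale : ∀ v : ℝ, s * heatKernel t (s * v) = heatKernel 1 v := by
      intro v
      unfold heatKernel
      have h2pi : Real.sqrt (2 * Real.pi * t) = Real.sqrt (2 * Real.pi) * s := by
        rw [hs_def, ← Real.sqrt_mul (by positivity : (0:ℝ) ≤ 2 * Real.pi) t]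
      have hexp : -((s * v) ^ 2) / (2 * t) = -(v ^ 2) / (2 * 1) := by
        rw [mul_pow, hs2]
        field_simp
      rw [h2pi, hexp, mul_one]
      have hsq : Real.sqrt (2 * Real.pi) ≠ 0 := by positivity
      field_simp
    -- change of variables
    have hrw : ∀ x : ℝ, heatOp t f x = ∫ u : ℝ, heatKernel 1 u * f (x - s * u) := by
      intro x
      have h0 : heatOp t f x = ∫ y : ℝ, heatKernel t (x - y) * f y := by
        simp only [heatOp, if_neg ht0]
      have h1 : ∫ y : ℝ, heatKernel t (x - y) * f y
          = ∫ u : ℝ, heatKernel t u * f (x - u) := by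
        rw [← integral_sub_left_eq_self (fun y => heatKernel t (x - y) * f y) volume x]
        congr 1 with u
        simp
      have h2 := MeasureTheory.Measure.integral_comp_mul_left (fun u : ℝ => heatKernel t u * f (x - u)) s
      -- h2 : ∫ v, heatKernel t (s*v) * f (x - s*v) = |s⁻¹| • ∫ u, heatKernel t u * f (x - u)
      have habs : |s⁻¹| = s⁻¹ := abs_of_pos (inv_pos.2 hs)
      rw [habs, smul_eq_mul] at h2
      have h3 : ∫ u : ℝ, heatKernel t u * f (x - u)
          = s * ∫ v : ℝ, heatKernel t (s * v) * f (x - s * v) := by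
        rw [h2]
        field_simp
      rw [h0, h1, h3, ← integral_const_mul]
      congr 1 with v
      rw [← mul_assoc, hscale v]
    -- the product function
    set Q : ℝ × ℝ → ℝ := fun p =>
      heatKernel 1 p.1 * ((f (p.2 - s * p.1) - f p.2) ^ 2 * Real.exp (-|p.2|)) with hQ_def
    have hQnn : ∀ u x : ℝ, 0 ≤ Q (u, x) := fun u x =>
      mul_nonneg (heatKernel_one_nonneg u) (mul_nonneg (sq_nonneg _) (Real.exp_pos _).le)
    have hQmeas : AEStronglyMeasurable Q ((volume : Measure ℝ).prod volume) := by
      apply Measurable.aestronglyMeasurable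
      apply Measurable.mul
      · exact continuous_heatKernel_one.measurable.comp measurable_fst
      · apply Measurable.mul
        · exact ((hf.comp (measurable_snd.sub (measurable_fst.const_mul s))).sub
            (hf.comp measurable_snd)).pow_const 2
        · exact measurable_snd.abs.neg.exp
    have hgsq := integrable_gw_sq hf2
    have hxint : ∀ u : ℝ, Integrable (fun x : ℝ => (f (x - s * u) - f x) ^ 2 * Real.exp (-|x|)) := by
      intro u
      refine Integrable.mono'
        (((hgsq.comp_sub_right (s * u)).const_mul (2 * Real.exp |s * u|)).add
          (hgsq.const_mul 2)) ?_ (Eventually.of_forall fun x => ?_)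
      · exact (((hf.comp (measurable_id.sub_const (s * u))).sub hf).pow_const 2).aestronglyMeasurable.mul
          (measurable_id.abs.neg.exp).aestronglyMeasurable
      · rw [Real.norm_of_nonneg (mul_nonneg (sq_nonneg _) (Real.exp_pos _).le)]
        exact ptwise f (s * u) x
    have hQint : Integrable Q ((volume : Measure ℝ).prod volume) := by
      refine (integrable_prod_iff hQmeas).2 ⟨Eventually.of_forall fun u => ?_, ?_⟩
      · exact (hxint u).const_mul (heatKernel 1 u)
      · have heq : ∀ u : ℝ, ∫ x : ℝ, ‖Q (u, x)‖ = heatKernel 1 u * Gfn f (s * u) := by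
          intro u
          have e0 : ∫ x : ℝ, ‖Q (u, x)‖ = ∫ x : ℝ, Q (u, x) := by
            congr 1 with x
            exact Real.norm_of_nonneg (hQnn u x)
          rw [e0]
          simp only [hQ_def]
          exact integral_const_mul _ _
        have hb : Integrable (fun u : ℝ =>
            (2 * K) * (heatKernel 1 u * Real.exp (s * |u|)) + (2 * K) * heatKernel 1 u) :=
          ((integrable_hk_exp s hs.le).const_mul _).add (integrable_hk.const_mul _)
        refine hb.mono' (hQmeas.norm.integral_prod_right') (Eventually.of_forall fun u => ?_)
        have hnn : 0 ≤ ∫ x : ℝ, ‖Q (u, x)‖ := integral_nonneg fun x => norm_nonneg _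
        rw [Real.norm_of_nonneg hnn, heq u]
        have h1 : Gfn f (s * u) ≤ (2 * Real.exp |s * u| + 2) * K := Gfn_le hf2 _
        have h2 : |s * u| = s * |u| := by rw [abs_mul, abs_of_pos hs]
        rw [h2] at h1
        nlinarith [mul_le_mul_of_nonneg_left h1 (heatKernel_one_nonneg u)]
    -- Jensen a.e.
    have hae : ∀ᵐ x : ℝ ∂(volume : Measure ℝ),
        (heatOp t f x - f x) ^ 2 * Real.exp (-|x|) ≤ ∫ u : ℝ, Q (u, x) := by
      filter_upwards [hQint.prod_left_ae] with x hx
      set ψ : ℝ → ℝ := fun u => f (x - s * u) - f x with hψ_def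
      have hψm : AEStronglyMeasurable ψ volume :=
        ((hf.comp ((measurable_id.const_mul s).const_sub x)).sub
          measurable_const).aestronglyMeasurable
      have hxx : Real.exp |x| * Real.exp (-|x|) = 1 := by
        rw [← Real.exp_add]; simp
      have hψ2 : Integrable (fun u : ℝ => heatKernel 1 u * ψ u ^ 2) := by
        refine (hx.const_mul (Real.exp |x|)).congr (Eventually.of_forall fun u => ?_)
        simp only [hQ_def, hψ_def]
        rw [Real.exp_neg]
        field_simp
      have hfc : Integrable (fun u : ℝ => heatKernel 1 u * f x) :=
        integrable_hk.mul_const (f x)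
      have hφint : Integrable (fun u : ℝ => heatKernel 1 u * f (x - s * u)) := by
        refine ((integrable_hk_mul hψm hψ2).add hfc).congr (Eventually.of_forall fun u => ?_)
        simp only [Pi.add_apply]
        simp only [hψ_def]
        ring
      have hsplit : heatOp t f x - f x = ∫ u : ℝ, heatKernel 1 u * ψ u := by
        have e1 : ∫ u : ℝ, heatKernel 1 u * ψ u
            = (∫ u : ℝ, heatKernel 1 u * f (x - s * u)) - (∫ u : ℝ, heatKernel 1 u) * f x := by
          rw [← integral_mul_const, ← integral_sub hφint hfc]
          congr 1 with u
          simp only [hψ_def]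
          ring
        rw [hrw x, e1, integral_hk_s2, one_mul]
      have e2 : ∫ u : ℝ, Q (u, x) = (∫ u : ℝ, heatKernel 1 u * ψ u ^ 2) * Real.exp (-|x|) := by
        rw [← integral_mul_const]
        congr 1 with u
        simp only [hQ_def, hψ_def]
        ring
      rw [hsplit, e2]
      exact mul_le_mul_of_nonneg_right (jensen_sq hψm hψ2) (Real.exp_pos _).le
    -- combine
    have hRHSint : Integrable (fun x : ℝ => ∫ u : ℝ, Q (u, x)) := hQint.integral_prod_right
    have step1 : D t ≤ ∫ x : ℝ, (∫ u : ℝ, Q (u, x)) :=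
      integral_mono_of_nonneg
        (Eventually.of_forall fun x => mul_nonneg (sq_nonneg _) (Real.exp_pos _).le)
        hRHSint hae
    have hswap := integral_integral_swap (f := fun u x : ℝ => Q (u, x)) hQint
    have step2 : ∫ x : ℝ, (∫ u : ℝ, Q (u, x)) = M t := by
      rw [← hswap, hM_def]
      dsimp only
      rw [← hs_def]
      congr 1 with u
      simp only [hQ_def]
      exact integral_const_mul _ _
    calc D t ≤ ∫ x : ℝ, (∫ u : ℝ, Q (u, x)) := step1
      _ = M t := step2
  exact tendsto_of_tendsto_of_tendsto_of_le_of_le' tendsto_const_nhds hM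
    (Eventually.of_forall hDl) hDu
end

section
/- Let w : ℝ → (0,∞) be twice continuously differentiable and strictly positive, and suppose there is a constant C ≥ 0 such that |w''(x)| ≤ C·w(x) for all x ∈ ℝ. Then for every twice continuously differentiable u : ℝ → ℝ with compact support, ∫_ℝ u''(x) u(x) w(x) dx ≤ (C/2) ∫_ℝ u(x)² w(x) dx. -/
open MeasureTheory Real Filter Topology

lemma integral_deriv_eq_zero' (f : ℝ → ℝ) (hf : ContDiff ℝ 1 f)
    (h2f : HasCompactSupport f) : ∫ x : ℝ, deriv f x = 0 := by
  have hint : Integrable (deriv f) :=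
    (hf.continuous_deriv le_rfl).integrable_of_hasCompactSupport h2f.deriv
  rw [← intervalIntegral.integral_Iic_add_Ioi (b := 0) hint.integrableOn hint.integrableOn,
    h2f.integral_Iic_deriv_eq hf, h2f.integral_Ioi_deriv_eq hf]
  ring

/-- Weighted energy inequality: if `w` is `C²`, strictly positive, with `|w''| ≤ C·w`,
then for every `C²` compactly supported `u`,
`∫ u'' u w ≤ (C/2) ∫ u² w`. -/
theorem weighted_energy_inequality (w : ℝ → ℝ) (hw : ContDiff ℝ 2 w)
    (hwpos : ∀ x : ℝ, 0 < w x) (C : ℝ) (hC : 0 ≤ C)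
    (hbound : ∀ x : ℝ, |deriv (deriv w) x| ≤ C * w x)
    (u : ℝ → ℝ) (hu : ContDiff ℝ 2 u) (hsupp : HasCompactSupport u) :
    ∫ x : ℝ, deriv (deriv u) x * u x * w x ≤ (C / 2) * ∫ x : ℝ, u x ^ 2 * w x := by
  -- derivative facts
  have hu2 : ContDiff ℝ (1 + 1) u := by norm_num; exact hu
  have hw2 : ContDiff ℝ (1 + 1) w := by norm_num; exact hw
  have hud : ContDiff ℝ 1 (deriv u) := (contDiff_succ_iff_deriv.mp hu2).2.2
  have hwd : ContDiff ℝ 1 (deriv w) := (contDiff_succ_iff_deriv.mp hw2).2.2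
  have hu1 : ContDiff ℝ 1 u := hu.of_le (by norm_num)
  have hw1 : ContDiff ℝ 1 w := hw.of_le (by norm_num)
  have hu' : ∀ x, HasDerivAt u (deriv u x) x :=
    fun x => (hu.differentiable (by norm_num) x).hasDerivAt
  have hw' : ∀ x, HasDerivAt w (deriv w x) x :=
    fun x => (hw.differentiable (by norm_num) x).hasDerivAt
  have hu'' : ∀ x, HasDerivAt (deriv u) (deriv (deriv u) x) x :=
    fun x => (hud.differentiable one_ne_zero x).hasDerivAt
  have hw'' : ∀ x, HasDerivAt (deriv w) (deriv (deriv w) x) x :=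
    fun x => (hwd.differentiable one_ne_zero x).hasDerivAt
  -- continuity facts
  have cu : Continuous u := hu.continuous
  have cw : Continuous w := hw.continuous
  have cu' : Continuous (deriv u) := hud.continuous
  have cw' : Continuous (deriv w) := hwd.continuous
  have cu'' : Continuous (deriv (deriv u)) := hud.continuous_deriv le_rfl
  have cw'' : Continuous (deriv (deriv w)) := hwd.continuous_deriv le_rfl
  -- compact supports
  have hmono : ∀ g : ℝ → ℝ, (∀ x, u x = 0 → g x = 0) → HasCompactSupport g := by
    intro g h
    exact hsupp.mono fun x hx hux => hx (h x hux)
  have hs1 : HasCompactSupport (fun x => deriv (deriv u) x * u x * w x) :=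
    hmono _ fun x hx => by simp [hx]
  have hmono' : ∀ g : ℝ → ℝ, (∀ x, deriv u x = 0 → g x = 0) → HasCompactSupport g := by
    intro g h
    exact hsupp.deriv.mono fun x hx hux => hx (h x hux)
  have hs2 : HasCompactSupport (fun x => deriv u x * deriv u x * w x) :=
    hmono' _ fun x hx => by simp [hx]
  have hs3 : HasCompactSupport (fun x => deriv u x * u x * deriv w x) :=
    hmono _ fun x hx => by simp [hx]
  have hs4 : HasCompactSupport (fun x => u x ^ 2 * deriv (deriv w) x) :=
    hmono _ fun x hx => by simp [hx]
  have hs5 : HasCompactSupport (fun x => C * (u x ^ 2 * w x)) :=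
    hmono _ fun x hx => by simp [hx]
  have hs6 : HasCompactSupport (fun x => u x ^ 2 * w x) :=
    hmono _ fun x hx => by simp [hx]
  -- integrability
  have i1 : Integrable (fun x => deriv (deriv u) x * u x * w x) :=
    ((cu''.mul cu).mul cw).integrable_of_hasCompactSupport hs1
  have i2 : Integrable (fun x => deriv u x * deriv u x * w x) :=
    ((cu'.mul cu').mul cw).integrable_of_hasCompactSupport hs2
  have i3 : Integrable (fun x => deriv u x * u x * deriv w x) :=
    ((cu'.mul cu).mul cw').integrable_of_hasCompactSupport hs3
  have i4 : Integrable (fun x => u x ^ 2 * deriv (deriv w) x) :=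
    ((cu.pow 2).mul cw'').integrable_of_hasCompactSupport hs4
  have i5 : Integrable (fun x => C * (u x ^ 2 * w x)) :=
    (continuous_const.mul ((cu.pow 2).mul cw)).integrable_of_hasCompactSupport hs5
  have i6 : Integrable (fun x => u x ^ 2 * w x) :=
    ((cu.pow 2).mul cw).integrable_of_hasCompactSupport hs6
  have i12 : Integrable (fun x => deriv (deriv u) x * u x * w x
      + deriv u x * deriv u x * w x) := i1.add i2
  have i3' : Integrable (fun x => 2 * (deriv u x * u x * deriv w x)) := i3.const_mul 2
  -- first identity
  set f : ℝ → ℝ := fun x => deriv u x * u x * w x with hf_def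
  have hfC1 : ContDiff ℝ 1 f := (hud.mul hu1).mul hw1
  have hfsupp : HasCompactSupport f := hmono _ fun x hx => by simp [hf_def, hx]
  have hfderiv : ∀ x, deriv f x = deriv (deriv u) x * u x * w x
      + deriv u x * deriv u x * w x + deriv u x * u x * deriv w x := by
    intro x
    have : HasDerivAt f ((deriv (deriv u) x * u x + deriv u x * deriv u x) * w x
        + deriv u x * u x * deriv w x) x := ((hu'' x).mul (hu' x)).mul (hw' x)
    rw [this.deriv]; ring
  have hzero1 : (∫ x : ℝ, deriv (deriv u) x * u x * w x)
      + (∫ x : ℝ, deriv u x * deriv u x * w x)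
      + (∫ x : ℝ, deriv u x * u x * deriv w x) = 0 := by
    rw [← integral_add i1 i2, ← integral_add i12 i3,
      ← integral_deriv_eq_zero' f hfC1 hfsupp]
    exact integral_congr_ae (Filter.Eventually.of_forall fun x => (hfderiv x).symm)
  -- second identity
  set g : ℝ → ℝ := fun x => u x * u x * deriv w x with hg_def
  have hgC1 : ContDiff ℝ 1 g := (hu1.mul hu1).mul hwd
  have hgsupp : HasCompactSupport g := hmono _ fun x hx => by simp [hg_def, hx]
  have hgderiv : ∀ x, deriv g x = 2 * (deriv u x * u x * deriv w x)
      + u x ^ 2 * deriv (deriv w) x := by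
    intro x
    have : HasDerivAt g ((deriv u x * u x + u x * deriv u x) * deriv w x
        + u x * u x * deriv (deriv w) x) x := ((hu' x).mul (hu' x)).mul (hw'' x)
    rw [this.deriv]; ring
  have hzero2 : 2 * (∫ x : ℝ, deriv u x * u x * deriv w x)
      + (∫ x : ℝ, u x ^ 2 * deriv (deriv w) x) = 0 := by
    rw [← integral_const_mul, ← integral_add i3' i4,
      ← integral_deriv_eq_zero' g hgC1 hgsupp]
    exact integral_congr_ae (Filter.Eventually.of_forall fun x => (hgderiv x).symm)
  -- nonnegativity of ∫ (u')² w
  have hI2 : 0 ≤ ∫ x : ℝ, deriv u x * deriv u x * w x :=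
    integral_nonneg fun x => mul_nonneg (mul_self_nonneg _) (hwpos x).le
  -- bound ∫ u² w'' ≤ C ∫ u² w
  have hI4 : (∫ x : ℝ, u x ^ 2 * deriv (deriv w) x) ≤ C * ∫ x : ℝ, u x ^ 2 * w x := by
    rw [← integral_const_mul]
    refine integral_mono i4 i5 fun x => ?_
    have h1 : deriv (deriv w) x ≤ C * w x := (abs_le.mp (hbound x)).2
    calc u x ^ 2 * deriv (deriv w) x ≤ u x ^ 2 * (C * w x) :=
          mul_le_mul_of_nonneg_left h1 (sq_nonneg _)
      _ = C * (u x ^ 2 * w x) := by ring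
  linarith
end
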